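/- (Loss decay for Bregman iterations with adaptive λ.) Let ℒ : ℝ^d → ℝ be differentiable with L-Lipschitz gradient, τ > 0, and λ⁽ᵏ⁾, λ⁽ᵏ⁻¹⁾ ≥ 0. Suppose p⁽ᵏ⁾ ∈ ∂EN_{λ⁽ᵏ⁻¹⁾}(θ⁽ᵏ⁾), p⁽ᵏ⁺¹⁾ = p⁽ᵏ⁾ − τ∇ℒ(θ⁽ᵏ⁾), and p⁽ᵏ⁺¹⁾ ∈ ∂EN_{λ⁽ᵏ⁾}(θ⁽ᵏ⁺¹⁾). Then ℒ(θ⁽ᵏ⁺¹⁾) + (1/τ − L/2)·‖θ⁽ᵏ⁺¹⁾ − θ⁽ᵏ⁾‖₂² + ((λ⁽ᵏ⁾ − λ⁽ᵏ⁻¹⁾)/τ)·(‖θ⁽ᵏ⁺¹⁾‖₁ − ‖θ⁽ᵏ⁾‖₁) ≤ ℒ(θ⁽ᵏ⁾). -/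

import Mathlib

open scoped RealInnerProductSpace BigOperators

noncomputable def l1 {d : ℕ} (x : EuclideanSpace ℝ (Fin d)) : ℝ := ∑ i, |x i|

noncomputable def EN {d : ℕ} (lam : ℝ) (θ : EuclideanSpace ℝ (Fin d)) : ℝ :=
  (1/2) * ‖θ‖^2 + lam * l1 θ

def IsENSubgradient {d : ℕ} (lam : ℝ) (p θ : EuclideanSpace ℝ (Fin d)) : Prop :=
  ∀ w : EuclideanSpace ℝ (Fin d), EN lam θ + ⟪p, w - θ⟫ ≤ EN lam w

/-- Convexity of the l1 norm. -/
lemma l1_convex {d : ℕ} (x y : EuclideanSpace ℝ (Fin d)) {t : ℝ} (ht0 : 0 ≤ t) (ht1 : t ≤ 1) :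
    l1 (x + t • (y - x)) ≤ (1 - t) * l1 x + t * l1 y := by
  simp only [l1, Finset.mul_sum, ← Finset.sum_add_distrib]
  apply Finset.sum_le_sum
  intro i _
  have : (x + t • (y - x)) i = (1 - t) * x i + t * y i := by
    simp [EuclideanSpace, PiLp.add_apply, PiLp.smul_apply, smul_eq_mul]
    ring
  rw [this]
  calc |(1 - t) * x i + t * y i| ≤ |(1 - t) * x i| + |t * y i| := abs_add_le _ _
    _ = (1 - t) * |x i| + t * |y i| := by
        rw [abs_mul, abs_mul, abs_of_nonneg (by linarith), abs_of_nonneg ht0]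

/-- Extraction of the l1 subgradient from an EN subgradient. -/
lemma subgrad_key {d : ℕ} {lam : ℝ} {p θ : EuclideanSpace ℝ (Fin d)}
    (h : IsENSubgradient lam p θ) (hlam : 0 ≤ lam) (w : EuclideanSpace ℝ (Fin d)) :
    lam * l1 θ + ⟪p - θ, w - θ⟫ ≤ lam * l1 w := by
  set Δ := w - θ with hΔ
  have key : ∀ t : ℝ, 0 < t → t ≤ 1 →
      ⟪p - θ, Δ⟫ ≤ t / 2 * ‖Δ‖ ^ 2 + lam * (l1 w - l1 θ) := by
    intro t ht0 ht1
    have h1 := h (θ + t • Δ)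
    have hl1 : lam * l1 (θ + t • Δ) ≤ lam * ((1 - t) * l1 θ + t * l1 w) :=
      mul_le_mul_of_nonneg_left (l1_convex θ w ht0.le ht1) hlam
    have hnorm : ‖θ + t • Δ‖ ^ 2 = ‖θ‖ ^ 2 + 2 * (t * ⟪θ, Δ⟫) + t ^ 2 * ‖Δ‖ ^ 2 := by
      rw [← real_inner_self_eq_norm_sq, ← real_inner_self_eq_norm_sq,
        ← real_inner_self_eq_norm_sq]
      rw [inner_add_add_self]
      simp only [real_inner_smul_left, real_inner_smul_right]
      rw [real_inner_comm Δ θ]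
      ring
    have hip : ⟪p, (θ + t • Δ) - θ⟫ = t * ⟪p, Δ⟫ := by
      rw [add_sub_cancel_left, real_inner_smul_right]
    rw [EN, EN, hip, hnorm] at h1
    have h2 : t * ⟪p, Δ⟫ ≤ t * ⟪θ, Δ⟫ + t ^ 2 / 2 * ‖Δ‖ ^ 2 + lam * (t * (l1 w - l1 θ)) := by
      nlinarith [hl1, h1]
    have h3 : ⟪p, Δ⟫ ≤ ⟪θ, Δ⟫ + t / 2 * ‖Δ‖ ^ 2 + lam * (l1 w - l1 θ) := by
      have := (mul_le_mul_iff_right₀ ht0).mp (by nlinarith : t * ⟪p, Δ⟫ ≤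
        t * (⟪θ, Δ⟫ + t / 2 * ‖Δ‖ ^ 2 + lam * (l1 w - l1 θ)))
      linarith
    rw [inner_sub_left]
    linarith
  have main : ⟪p - θ, Δ⟫ ≤ lam * (l1 w - l1 θ) := by
    apply le_of_forall_pos_le_add
    intro ε hε
    set t := min 1 (2 * ε / (‖Δ‖ ^ 2 + 1)) with htdef
    have hd : (0:ℝ) < ‖Δ‖ ^ 2 + 1 := by positivity
    have ht0 : 0 < t := lt_min one_pos (by positivity)
    have ht1 : t ≤ 1 := min_le_left _ _
    have hb : t / 2 * ‖Δ‖ ^ 2 ≤ ε := by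
      have ht2 : t ≤ 2 * ε / (‖Δ‖ ^ 2 + 1) := min_le_right _ _
      rw [le_div_iff₀ hd] at ht2
      nlinarith [sq_nonneg ‖Δ‖]
    linarith [key t ht0 ht1]
  linarith

/-- The descent lemma for L-smooth functions. -/
lemma descent_lemma {d : ℕ} (L : ℝ) (ℒ : EuclideanSpace ℝ (Fin d) → ℝ)
    (G : EuclideanSpace ℝ (Fin d) → EuclideanSpace ℝ (Fin d))
    (hgrad : ∀ x, HasGradientAt ℒ (G x) x)
    (hLip : ∀ x y, ‖G x - G y‖ ≤ L * ‖x - y‖)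
    (x y : EuclideanSpace ℝ (Fin d)) :
    ℒ y ≤ ℒ x + ⟪G x, y - x⟫ + L / 2 * ‖y - x‖ ^ 2 := by
  set Δ := y - x with hΔ
  set c : ℝ → EuclideanSpace ℝ (Fin d) := fun t => x + t • Δ with hc
  have hcderiv : ∀ t : ℝ, HasDerivAt c Δ t := by
    intro t
    have : HasDerivAt (fun s : ℝ => s • Δ) ((1:ℝ) • Δ) t := (hasDerivAt_id t).smul_const Δ
    have h2 := this.const_add x
    rw [one_smul] at h2
    exact h2
  set φ : ℝ → ℝ := fun t => ℒ (c t) with hφ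
  have hφderiv : ∀ t : ℝ, HasDerivAt φ ⟪G (c t), Δ⟫ t := by
    intro t
    have := ((hgrad (c t)).hasFDerivAt.comp_hasDerivAt t (hcderiv t))
    simp [InnerProductSpace.toDual_apply_apply] at this
    exact this
  set ψ : ℝ → ℝ := fun t => φ t - t * ⟪G x, Δ⟫ - L / 2 * t ^ 2 * ‖Δ‖ ^ 2 with hψ
  have hψderiv : ∀ t : ℝ, HasDerivAt ψ (⟪G (c t), Δ⟫ - ⟪G x, Δ⟫ - L * t * ‖Δ‖ ^ 2) t := by
    intro t
    have h1 : HasDerivAt (fun t : ℝ => t * ⟪G x, Δ⟫) ⟪G x, Δ⟫ t := by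
      simpa using (hasDerivAt_id t).mul_const ⟪G x, Δ⟫
    have h2 : HasDerivAt (fun t : ℝ => L / 2 * t ^ 2 * ‖Δ‖ ^ 2) (L * t * ‖Δ‖ ^ 2) t := by
      have : HasDerivAt (fun t : ℝ => t ^ 2) (2 * t) t := by
        simpa using hasDerivAt_pow 2 t
      have := (this.const_mul (L / 2)).mul_const (‖Δ‖ ^ 2)
      rw [show L * t * ‖Δ‖ ^ 2 = L / 2 * (2 * t) * ‖Δ‖ ^ 2 by ring]
      exact this
    exact ((hφderiv t).sub h1).sub h2
  have hψnonpos : ∀ t ∈ Set.Icc (0:ℝ) 1, deriv ψ t ≤ 0 := by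
    intro t ht
    rw [(hψderiv t).deriv]
    have hb : ⟪G (c t), Δ⟫ - ⟪G x, Δ⟫ ≤ L * t * ‖Δ‖ ^ 2 := by
      rw [← inner_sub_left]
      calc ⟪G (c t) - G x, Δ⟫ ≤ ‖G (c t) - G x‖ * ‖Δ‖ := real_inner_le_norm _ _
        _ ≤ (L * ‖c t - x‖) * ‖Δ‖ := by
            apply mul_le_mul_of_nonneg_right (hLip _ _) (norm_nonneg _)
        _ = L * t * ‖Δ‖ ^ 2 := by
            have : c t - x = t • Δ := by simp [hc]
            rw [this, norm_smul, Real.norm_eq_abs, abs_of_nonneg ht.1]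
            ring
    linarith
  have hanti : AntitoneOn ψ (Set.Icc (0:ℝ) 1) := by
    apply antitoneOn_of_deriv_nonpos (convex_Icc 0 1)
    · exact fun t _ => ((hψderiv t).continuousAt).continuousWithinAt
    · exact fun t _ => ((hψderiv t).differentiableAt).differentiableWithinAt
    · intro t ht
      exact hψnonpos t (interior_subset ht)
  have h01 := hanti (Set.left_mem_Icc.mpr zero_le_one) (Set.right_mem_Icc.mpr zero_le_one)
    zero_le_one
  have hψ0 : ψ 0 = ℒ x := by simp [hψ, hφ, hc]
  have hψ1 : ψ 1 = ℒ y - ⟪G x, Δ⟫ - L / 2 * ‖Δ‖ ^ 2 := by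
    simp [hψ, hφ, hc, hΔ]
  rw [hψ0, hψ1] at h01
  linarith

/-- Loss decay for Bregman iterations with adaptive λ (Lemma 1). -/
theorem bregman_loss_decay {d : ℕ} (L τ lamk lamk1 : ℝ)
    (hτ : 0 < τ) (hlamk : 0 ≤ lamk) (hlamk1 : 0 ≤ lamk1)
    (ℒ : EuclideanSpace ℝ (Fin d) → ℝ) (G : EuclideanSpace ℝ (Fin d) → EuclideanSpace ℝ (Fin d))
    (hgrad : ∀ x, HasGradientAt ℒ (G x) x)
    (hLip : ∀ x y, ‖G x - G y‖ ≤ L * ‖x - y‖)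
    (θk θk1 pk pk1 : EuclideanSpace ℝ (Fin d))
    (hpk : IsENSubgradient lamk1 pk θk)
    (hstep : pk1 = pk - τ • G θk)
    (hpk1 : IsENSubgradient lamk pk1 θk1) :
    ℒ θk1 + (1/τ - L/2) * ‖θk1 - θk‖^2 + ((lamk - lamk1)/τ) * (l1 θk1 - l1 θk) ≤ ℒ θk := by
  have h1 := subgrad_key hpk hlamk1 θk1
  have h2 := subgrad_key hpk1 hlamk θk
  -- rewrite the inner products
  have e1 : ⟪pk1 - θk1, θk - θk1⟫ = -⟪pk1 - θk1, θk1 - θk⟫ := by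
    rw [← inner_neg_right]; congr 1; abel
  have e2 : ⟪pk1 - θk1, θk1 - θk⟫
      = ⟪pk, θk1 - θk⟫ - τ * ⟪G θk, θk1 - θk⟫ - ⟪θk1, θk1 - θk⟫ := by
    rw [hstep]
    rw [show pk - τ • G θk - θk1 = (pk - θk1) - τ • G θk by abel]
    rw [inner_sub_left, inner_sub_left, real_inner_smul_left]
    ring
  have e3 : ⟪pk - θk, θk1 - θk⟫ = ⟪pk, θk1 - θk⟫ - ⟪θk, θk1 - θk⟫ := by
    rw [inner_sub_left]
  have e4 : ⟪θk1, θk1 - θk⟫ - ⟪θk, θk1 - θk⟫ = ‖θk1 - θk‖ ^ 2 := by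
    rw [← inner_sub_left, real_inner_self_eq_norm_sq]
  -- combine: τ ⟪G θk, θk1 - θk⟫ + ‖θk1 - θk‖² ≤ (lamk1 - lamk) * (l1 θk1 - l1 θk)
  have hmono : τ * ⟪G θk, θk1 - θk⟫ + ‖θk1 - θk‖ ^ 2
      ≤ (lamk1 - lamk) * (l1 θk1 - l1 θk) := by
    rw [e1, e2] at h2
    rw [e3] at h1
    nlinarith [e4]
  have hdesc := descent_lemma L ℒ G hgrad hLip θk θk1
  have hG : ⟪G θk, θk1 - θk⟫ ≤ (1/τ) * ((lamk1 - lamk) * (l1 θk1 - l1 θk) - ‖θk1 - θk‖ ^ 2) := by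
    have h5 : (1/τ) * (τ * ⟪G θk, θk1 - θk⟫)
        ≤ (1/τ) * ((lamk1 - lamk) * (l1 θk1 - l1 θk) - ‖θk1 - θk‖ ^ 2) :=
      mul_le_mul_of_nonneg_left (by linarith) (by positivity)
    have h6 : (1/τ) * (τ * ⟪G θk, θk1 - θk⟫) = ⟪G θk, θk1 - θk⟫ := by
      field_simp
    linarith
  have hfin : (1/τ) * ((lamk1 - lamk) * (l1 θk1 - l1 θk) - ‖θk1 - θk‖ ^ 2)
      = (lamk1 - lamk)/τ * (l1 θk1 - l1 θk) - (1/τ) * ‖θk1 - θk‖ ^ 2 := by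
    ring
  have hneg : (lamk - lamk1)/τ * (l1 θk1 - l1 θk)
      = -((lamk1 - lamk)/τ * (l1 θk1 - l1 θk)) := by ring
  nlinarith [hdesc, hG, hfin, hneg]
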